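/- For every δ ∈ (0, 1) and every t > 0, the family (k : ℤ) ↦ (t δ^k)^{3/2} e^{−t δ^k} is summable, and its sum satisfies ∑_{k ∈ ℤ} (t δ^k)^{3/2} e^{−t δ^k} ≤ (3/(2e))^{3/2} + √π / (2(1 − δ)). -/

import Mathlib

open MeasureTheory Set

noncomputable def Gfun (u : ℝ) : ℝ := Real.sqrt u * Real.exp (-u)

lemma Gfun_nonneg (u : ℝ) : 0 ≤ Gfun u := by
  unfold Gfun; positivity

lemma Gfun_cont : Continuous Gfun := by
  unfold Gfun; fun_prop

lemma Gfun_intOn : IntegrableOn Gfun (Ioi 0) := by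
  have h := Real.GammaIntegral_convergent (s := 3/2) (by norm_num)
  refine h.congr_fun ?_ measurableSet_Ioi
  intro x hx
  have hx0 : (0:ℝ) ≤ x := le_of_lt hx
  unfold Gfun
  rw [Real.sqrt_eq_rpow]
  norm_num [mul_comm]

lemma Gfun_integral : ∫ x in Ioi (0:ℝ), Gfun x = Real.sqrt Real.pi / 2 := by
  have h := (Real.Gamma_eq_integral (s := 3/2) (by norm_num)).symm
  have h2 : Real.Gamma (3/2) = Real.sqrt Real.pi / 2 := by
    have : (3/2 : ℝ) = 1/2 + 1 := by norm_num
    rw [this, Real.Gamma_add_one (by norm_num), Real.Gamma_one_half_eq]; ring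
  rw [← h2, ← h]
  refine setIntegral_congr_fun measurableSet_Ioi ?_
  intro x hx
  unfold Gfun
  rw [Real.sqrt_eq_rpow]
  norm_num [mul_comm]

lemma Gfun_interval_le {A B : ℝ} (hA : 0 < A) (hAB : A ≤ B) :
    ∫ x in A..B, Gfun x ≤ Real.sqrt Real.pi / 2 := by
  rw [intervalIntegral.integral_of_le hAB, ← Gfun_integral]
  refine setIntegral_mono_set Gfun_intOn ?_ ?_
  · exact Filter.Eventually.of_forall fun x => Gfun_nonneg x
  · exact Filter.Eventually.of_forall (fun x hx => lt_trans hA hx.1)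

-- sup lemma
lemma Ffun_le_sup {u : ℝ} (hu : 0 ≤ u) :
    u ^ ((3:ℝ)/2) * Real.exp (-u) ≤ (3 / (2 * Real.exp 1)) ^ ((3:ℝ)/2) := by
  have key : u * Real.exp (-(2*u/3)) ≤ 3 / (2 * Real.exp 1) := by
    have h1 := Real.add_one_le_exp (2*u/3 - 1)
    have h2 : Real.exp (2*u/3 - 1) = Real.exp (2*u/3) / Real.exp 1 := by
      rw [Real.exp_sub]
    have he := Real.exp_pos (2*u/3)
    have he1 := Real.exp_pos 1
    rw [Real.exp_neg, ← div_eq_mul_inv]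
    rw [h2] at h1
    rw [div_le_div_iff₀ (by positivity) (by positivity)]
    have h3 : 2*u/3 * Real.exp 1 ≤ Real.exp (2*u/3) := by
      rw [← le_div_iff₀ he1]; linarith
    linarith
  have h3 : (u * Real.exp (-(2*u/3))) ^ ((3:ℝ)/2) ≤ (3 / (2 * Real.exp 1)) ^ ((3:ℝ)/2) := by
    refine Real.rpow_le_rpow (by positivity) key (by norm_num)
  calc u ^ ((3:ℝ)/2) * Real.exp (-u) = (u * Real.exp (-(2*u/3))) ^ ((3:ℝ)/2) := by
        rw [Real.mul_rpow hu (le_of_lt (Real.exp_pos _)), ← Real.exp_mul]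
        ring_nf
    _ ≤ _ := h3

lemma Ffun_eq {u : ℝ} (hu : 0 < u) :
    u ^ ((3:ℝ)/2) * Real.exp (-u) = u * Gfun u := by
  unfold Gfun
  rw [Real.sqrt_eq_rpow]
  have : ((3:ℝ)/2) = 1 + 1/2 := by norm_num
  rw [this, Real.rpow_add hu, Real.rpow_one]
  ring

lemma Gfun_mono {a b : ℝ} (ha : 0 ≤ a) (hab : a ≤ b) (hb : b ≤ 1/2) :
    Gfun a ≤ Gfun b := by
  rcases eq_or_lt_of_le ha with h | ha0
  · rw [← h]; unfold Gfun; rw [Real.sqrt_zero, zero_mul]; positivity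
  have hb0 : 0 < b := lt_of_lt_of_le ha0 hab
  have key : a ≤ b * Real.exp (2 * (a - b)) := by
    have h1 : 1 + 2*(a-b) ≤ Real.exp (2*(a-b)) := by
      have := Real.add_one_le_exp (2*(a-b)); linarith
    nlinarith
  have h2 : Real.sqrt a ≤ Real.sqrt b * Real.exp (a - b) := by
    have : Real.sqrt a ≤ Real.sqrt (b * Real.exp (2*(a-b))) := Real.sqrt_le_sqrt key
    have e : Real.sqrt (Real.exp (2*(a-b))) = Real.exp (a-b) := by
      rw [← Real.exp_half]; ring_nf
    rwa [Real.sqrt_mul hb0.le, e] at this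
  unfold Gfun
  have he := Real.exp_pos (-a)
  calc Real.sqrt a * Real.exp (-a) ≤ (Real.sqrt b * Real.exp (a-b)) * Real.exp (-a) := by
        nlinarith
    _ = Real.sqrt b * Real.exp (-b) := by rw [mul_assoc, ← Real.exp_add]; ring_nf

lemma Gfun_anti {a b : ℝ} (ha : 1/2 ≤ a) (hab : a ≤ b) :
    Gfun b ≤ Gfun a := by
  have ha0 : (0:ℝ) < a := by linarith
  have key : b ≤ a * Real.exp (2 * (b - a)) := by
    have h1 : 1 + 2*(b-a) ≤ Real.exp (2*(b-a)) := by
      have := Real.add_one_le_exp (2*(b-a)); linarith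
    nlinarith
  have h2 : Real.sqrt b ≤ Real.sqrt a * Real.exp (b - a) := by
    have : Real.sqrt b ≤ Real.sqrt (a * Real.exp (2*(b-a))) := Real.sqrt_le_sqrt key
    have e : Real.sqrt (Real.exp (2*(b-a))) = Real.exp (b-a) := by
      rw [← Real.exp_half]; ring_nf
    rwa [Real.sqrt_mul ha0.le, e] at this
  unfold Gfun
  have he := Real.exp_pos (-b)
  calc Real.sqrt b * Real.exp (-b) ≤ (Real.sqrt a * Real.exp (b-a)) * Real.exp (-b) := by
        nlinarith
    _ = Real.sqrt a * Real.exp (-a) := by rw [mul_assoc, ← Real.exp_add]; ring_nf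
set_option maxHeartbeats 1000000 in
lemma finset_bound (δ : ℝ) (hδ0 : 0 < δ) (hδ1 : δ < 1) (t : ℝ) (ht : 0 < t) (S : Finset ℤ) :
    ∑ k ∈ S, (t * δ ^ k) ^ ((3:ℝ)/2) * Real.exp (-(t * δ ^ k)) ≤
      (3 / (2 * Real.exp 1)) ^ ((3:ℝ)/2) + Real.sqrt Real.pi / (2 * (1 - δ)) := by
  classical
  set C : ℝ := (3 / (2 * Real.exp 1)) ^ ((3:ℝ)/2) with hC
  set c : ℝ := 1 - δ with hc
  have hc0 : 0 < c := by simp [hc]; linarith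
  set u : ℤ → ℝ := fun k => t * δ ^ k with hu
  have hupos : ∀ k, 0 < u k := fun k => mul_pos ht (zpow_pos hδ0 k)
  have huanti : ∀ {k m : ℤ}, k ≤ m → u m ≤ u k := by
    intro k m h
    exact mul_le_mul_of_nonneg_left (zpow_le_zpow_right_of_le_one₀ hδ0 hδ1.le h) ht.le
  have hstep : ∀ k, u (k + 1) = δ * u k := by
    intro k; simp only [hu, zpow_add_one₀ (ne_of_gt hδ0)]; ring
  have hstep' : ∀ k, u k = δ * u (k - 1) := by
    intro k; have := hstep (k - 1); simpa using this
  -- the crossing index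
  obtain ⟨k₀, hk₀, hleast⟩ : ∃ k₀ : ℤ, u k₀ ≤ 1/2 ∧ ∀ z : ℤ, u z ≤ 1/2 → k₀ ≤ z := by
    have hinh : ∃ z : ℤ, u z ≤ 1/2 := by
      obtain ⟨n, hn⟩ := exists_pow_lt_of_lt_one (x := 1/(2*t)) (by positivity) hδ1
      refine ⟨n, ?_⟩
      have : u n = t * δ ^ n := by simp [hu]
      rw [this]
      have := mul_lt_mul_of_pos_left hn ht
      rw [mul_one_div] at this
      have ht2 : t / (2 * t) = 1/2 := by field_simp
      linarith
    have hbdd : ∃ b : ℤ, ∀ z : ℤ, u z ≤ 1/2 → b ≤ z := by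
      obtain ⟨n, hn⟩ := exists_pow_lt_of_lt_one (x := 2*t) (by positivity) hδ1
      refine ⟨-n, fun z hz => ?_⟩
      by_contra hlt
      push_neg at hlt
      have h1 : u (-n) ≤ u z := huanti hlt.le
      have h2 : u (-n) = t * (δ ^ n)⁻¹ := by
        simp [hu, zpow_neg, zpow_natCast]
      have hδn : 0 < δ ^ n := pow_pos hδ0 n
      have : (1:ℝ)/2 < u (-n) := by
        rw [h2, show t * (δ ^ n)⁻¹ = t / δ ^ n from (div_eq_mul_inv t _).symm,
          lt_div_iff₀ hδn]
        linarith
      linarith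
    obtain ⟨b, hb⟩ := hbdd
    obtain ⟨lb, hlb1, hlb2⟩ := Int.exists_least_of_bdd (P := fun z => u z ≤ 1/2) ⟨b, hb⟩ hinh
    exact ⟨lb, hlb1, hlb2⟩
  have hhalf : 1/2 < u (k₀ - 1) := by
    by_contra h
    push_neg at h
    have := hleast _ h
    omega
  -- integrability helper
  have hii : ∀ a b : ℝ, IntervalIntegrable Gfun MeasureTheory.volume a b :=
    fun a b => Gfun_cont.intervalIntegrable a b
  -- B1 : upper tail
  have B1 : ∀ k : ℤ, k₀ + 1 ≤ k → c * (u k * Gfun (u k)) ≤ ∫ x in u k..u (k-1), Gfun x := by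
    intro k hk
    have hlt : u k ≤ u (k - 1) := huanti (by omega)
    have hk1 : u (k - 1) ≤ 1/2 := le_trans (huanti (by omega)) hk₀
    have hmono : ∀ x ∈ Icc (u k) (u (k-1)), Gfun (u k) ≤ Gfun x := by
      intro x hx
      exact Gfun_mono (hupos k).le hx.1 (le_trans hx.2 hk1)
    have hint : (u (k-1) - u k) * Gfun (u k) ≤ ∫ x in u k..u (k-1), Gfun x := by
      have := intervalIntegral.integral_mono_on hlt (intervalIntegrable_const) (hii _ _) hmono
      simpa [smul_eq_mul, mul_comm] using this
    have hlen : c * u k ≤ u (k-1) - u k := by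
      have h1 := hstep' k
      have h2 := hupos (k - 1)
      nlinarith
    nlinarith [Gfun_nonneg (u k)]
  -- B2 : lower tail
  have B2 : ∀ k : ℤ, k ≤ k₀ - 2 → c * (u k * Gfun (u k)) ≤ ∫ x in u (k+1)..u k, Gfun x := by
    intro k hk
    have hlt : u (k+1) ≤ u k := huanti (by omega)
    have hk1 : 1/2 ≤ u (k+1) := le_trans hhalf.le (huanti (by omega))
    have hmono : ∀ x ∈ Icc (u (k+1)) (u k), Gfun (u k) ≤ Gfun x := by
      intro x hx
      exact Gfun_anti (le_trans hk1 hx.1) hx.2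
    have hint : (u k - u (k+1)) * Gfun (u k) ≤ ∫ x in u (k+1)..u k, Gfun x := by
      have := intervalIntegral.integral_mono_on hlt (intervalIntegrable_const) (hii _ _) hmono
      simpa [smul_eq_mul, mul_comm] using this
    have hlen : u k - u (k+1) = c * u k := by
      have h1 := hstep k
      simp [hc]; nlinarith
    nlinarith [Gfun_nonneg (u k)]
  -- B3 : the two central terms
  have B3 : c * (u (k₀ - 1) * Gfun (u (k₀ - 1)) + u k₀ * Gfun (u k₀)) ≤
      c * C + ∫ x in u k₀..u (k₀ - 1), Gfun x := by
    set a := u k₀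
    set b := u (k₀ - 1)
    have hab : a ≤ b := huanti (by omega)
    have ha0 : 0 < a := hupos _
    have hba : a = δ * b := hstep' k₀
    have hlen : c * b = b - a := by rw [hc, hba]; ring
    have hlen' : c * a ≤ b - a := by nlinarith
    have hminle : ∀ x ∈ Icc a b, min (Gfun a) (Gfun b) ≤ Gfun x := by
      intro x hx
      rcases le_or_gt x (1/2) with h | h
      · exact le_trans (min_le_left _ _) (Gfun_mono ha0.le hx.1 h)
      · exact le_trans (min_le_right _ _) (Gfun_anti h.le hx.2)
    have hint : (b - a) * min (Gfun a) (Gfun b) ≤ ∫ x in a..b, Gfun x := by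
      have := intervalIntegral.integral_mono_on hab (intervalIntegrable_const) (hii _ _) hminle
      simpa [smul_eq_mul, mul_comm] using this
    have hsupa : a * Gfun a ≤ C := by
      rw [← Ffun_eq ha0]; exact Ffun_le_sup ha0.le
    have hsupb : b * Gfun b ≤ C := by
      rw [← Ffun_eq (hupos _)]; exact Ffun_le_sup (hupos _).le
    rcases le_total (Gfun a) (Gfun b) with h | h
    · have h1 : c * (a * Gfun a) ≤ (b - a) * min (Gfun a) (Gfun b) := by
        rw [min_eq_left h]
        nlinarith [Gfun_nonneg a]
      have h2 : c * (b * Gfun b) ≤ c * C := by nlinarith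
      nlinarith
    · have h1 : c * (b * Gfun b) ≤ (b - a) * min (Gfun a) (Gfun b) := by
        rw [min_eq_right h, ← hlen]
        ring_nf; rfl
      have h2 : c * (a * Gfun a) ≤ c * C := by nlinarith
      nlinarith
  -- main induction
  have key : ∀ N : ℕ, 1 ≤ N →
      c * ∑ k ∈ Finset.Icc (k₀ - N) (k₀ + N), u k * Gfun (u k) ≤
        c * C + ∫ x in u (k₀ + N)..u (k₀ - N), Gfun x := by
    intro N hN
    induction N, hN using Nat.le_induction with
    | base =>
      have hset : Finset.Icc (k₀ - (1:ℕ)) (k₀ + (1:ℕ)) = {k₀ - 1, k₀, k₀ + 1} := by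
        ext x; simp [Finset.mem_Icc]; omega
      rw [hset, Finset.sum_insert (by simp only [Finset.mem_insert, Finset.mem_singleton]; omega),
        Finset.sum_insert (by simp only [Finset.mem_singleton]; omega),
        Finset.sum_singleton]
      have hB1 := B1 (k₀ + 1) le_rfl
      have hadd := intervalIntegral.integral_add_adjacent_intervals
        (hii (u (k₀ + 1)) (u k₀)) (hii (u k₀) (u (k₀ - 1)))
      have : (k₀ + 1 - 1 : ℤ) = k₀ := by ring
      rw [this] at hB1
      push_cast
      linarith [B3]
    | succ N hN ih =>
      have hset : Finset.Icc (k₀ - ((N:ℤ) + 1)) (k₀ + ((N:ℤ) + 1)) =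
          insert (k₀ - (N + 1)) (insert (k₀ + (N + 1)) (Finset.Icc (k₀ - N) (k₀ + N))) := by
        ext x; simp [Finset.mem_Icc]; omega
      push_cast
      rw [hset, Finset.sum_insert (by simp only [Finset.mem_insert, Finset.mem_Icc]; omega),
        Finset.sum_insert (by simp only [Finset.mem_Icc]; omega)]
      have hB2 := B2 (k₀ - (N + 1)) (by omega)
      have hB1 := B1 (k₀ + (N + 1)) (by omega)
      have e1 : (k₀ - ((N:ℤ) + 1) + 1) = k₀ - N := by ring
      have e2 : (k₀ + ((N:ℤ) + 1) - 1) = k₀ + N := by ring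
      rw [e1] at hB2
      rw [e2] at hB1
      have hadd1 := intervalIntegral.integral_add_adjacent_intervals
        (hii (u (k₀ + ((N:ℤ) + 1))) (u (k₀ + N))) (hii (u (k₀ + N)) (u (k₀ - N)))
      have hadd2 := intervalIntegral.integral_add_adjacent_intervals
        (hii (u (k₀ + ((N:ℤ) + 1))) (u (k₀ - N))) (hii (u (k₀ - N)) (u (k₀ - ((N:ℤ) + 1))))
      rw [mul_add, mul_add]
      linarith
  -- conclude
  obtain ⟨N, hN1, hNb⟩ : ∃ N : ℕ, 1 ≤ N ∧ ∀ k ∈ S, (k - k₀).natAbs < N := by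
    refine ⟨1 + S.sup (fun k => (k - k₀).natAbs), by omega, fun k hk => ?_⟩
    have h := Finset.le_sup (f := fun k => (k - k₀).natAbs) hk
    omega
  have hsub : S ⊆ Finset.Icc (k₀ - N) (k₀ + N) := by
    intro k hk
    have := hNb k hk
    simp only [Finset.mem_Icc]
    omega
  have hsum1 : ∑ k ∈ S, (t * δ ^ k) ^ ((3:ℝ)/2) * Real.exp (-(t * δ ^ k)) =
      ∑ k ∈ S, u k * Gfun (u k) := by
    refine Finset.sum_congr rfl fun k _ => ?_
    exact Ffun_eq (hupos k)
  have hsum2 : ∑ k ∈ S, u k * Gfun (u k) ≤ ∑ k ∈ Finset.Icc (k₀ - N) (k₀ + N), u k * Gfun (u k) := by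
    refine Finset.sum_le_sum_of_subset_of_nonneg hsub fun k _ _ => ?_
    exact mul_nonneg (hupos k).le (Gfun_nonneg _)
  have hkey := key N hN1
  have hIle : ∫ x in u (k₀ + N)..u (k₀ - N), Gfun x ≤ Real.sqrt Real.pi / 2 :=
    Gfun_interval_le (hupos _) (huanti (by omega))
  have hfin : c * ∑ k ∈ S, u k * Gfun (u k) ≤ c * C + Real.sqrt Real.pi / 2 := by
    have h1 : c * ∑ k ∈ S, u k * Gfun (u k) ≤
        c * ∑ k ∈ Finset.Icc (k₀ - N) (k₀ + N), u k * Gfun (u k) := by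
      exact mul_le_mul_of_nonneg_left hsum2 hc0.le
    exact le_trans (le_trans h1 hkey) (add_le_add_right hIle (c * C))
  rw [hsum1]
  have hgoal : Real.sqrt Real.pi / (2 * (1 - δ)) = (Real.sqrt Real.pi / 2) / c := by
    rw [hc, div_div]
  rw [hgoal]
  rw [← sub_nonneg]
  have : C + Real.sqrt Real.pi / 2 / c - ∑ k ∈ S, u k * Gfun (u k) =
      (c * C + Real.sqrt Real.pi / 2 - c * ∑ k ∈ S, u k * Gfun (u k)) / c := by
    field_simp
  rw [this]
  exact div_nonneg (by linarith) hc0.le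

theorem stmt_11 (δ : ℝ) (hδ : δ ∈ Set.Ioo (0 : ℝ) 1) (t : ℝ) (ht : 0 < t) :
    Summable (fun k : ℤ => (t * δ ^ k) ^ ((3 : ℝ) / 2) * Real.exp (-(t * δ ^ k))) ∧
    ∑' k : ℤ, (t * δ ^ k) ^ ((3 : ℝ) / 2) * Real.exp (-(t * δ ^ k)) ≤
      (3 / (2 * Real.exp 1)) ^ ((3 : ℝ) / 2) + Real.sqrt Real.pi / (2 * (1 - δ)) := by
  obtain ⟨hδ0, hδ1⟩ := hδ
  have hnn : 0 ≤ fun k : ℤ => (t * δ ^ k) ^ ((3 : ℝ) / 2) * Real.exp (-(t * δ ^ k)) :=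
    fun k => mul_nonneg (Real.rpow_nonneg (mul_nonneg ht.le (zpow_nonneg hδ0.le k)) _)
      (Real.exp_nonneg _)
  have hb := fun S => finset_bound δ hδ0 hδ1 t ht S
  have hs := summable_of_sum_le hnn hb
  exact ⟨hs, Summable.tsum_le_of_sum_le hs hb⟩
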